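/- For every f:𝒳→ℝ with E[f(X)|S=0]=0, the function g(y) = E[f(X)|Y=y,S=0] satisfies g(y) = ρ_m · E[f(X)·f_m(X)|S=0] · g_m(y) for every y ∈ 𝒴={0,1}. -/

import Mathlib

/-- For every `f : 𝒳 → ℝ` with `E[f(X)|S=0] = 0`, the function
`g(y) = E[f(X)|Y=y,S=0]` satisfies `g(y) = ρ_m · E[f(X)·f_m(X)|S=0] · g_m(y)` for every
`y ∈ 𝒴 = {0,1}`.
Here `𝒴 = Bool` (`false ↔ 0`, `true ↔ 1`), `W x y = W_{Y|X}(y|x)` is the channel in the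
Markov chain `S → X → Y`, `P0 = P_{X|S=0}` has full support,
`Q0 = P_{Y|S=0} = W ∘ P0` with `p = Q0 true ∈ (0,1)`,
`g_m(0) = √(p/(1−p))`, `g_m(1) = −√((1−p)/p)`,
`ρ_m = √(E[E[g_m(Y)|X,S=0]²|S=0]) > 0`, `f_m(x) = E[g_m(Y)|X=x,S=0]/ρ_m`, and
`g(y) = E[f(X)|Y=y,S=0] = (∑ x, P0(x)·W(y|x)·f(x)) / Q0(y)`. -/
theorem stmt16
    {𝒳 : Type*} [Fintype 𝒳]
    (P0 : 𝒳 → ℝ) (hP0pos : ∀ x, 0 < P0 x) (hP0sum : ∑ x, P0 x = 1)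
    (W : 𝒳 → Bool → ℝ)
    (hWnn : ∀ x y, 0 ≤ W x y) (hWsum : ∀ x, W x false + W x true = 1)
    (Q0 : Bool → ℝ) (hQ0 : ∀ y, Q0 y = ∑ x, P0 x * W x y)
    (hp0 : 0 < Q0 true) (hp1 : Q0 true < 1)
    (gm : Bool → ℝ)
    (hgmf : gm false = Real.sqrt (Q0 true / (1 - Q0 true)))
    (hgmt : gm true = -Real.sqrt ((1 - Q0 true) / Q0 true))
    (ρm : ℝ)
    (hρm : ρm = Real.sqrt (∑ x, P0 x * (gm false * W x false + gm true * W x true) ^ 2))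
    (hρmpos : 0 < ρm)
    (fm : 𝒳 → ℝ)
    (hfm : ∀ x, fm x = (gm false * W x false + gm true * W x true) / ρm)
    (f : 𝒳 → ℝ)
    (hf : ∑ x, P0 x * f x = 0)
    (g : Bool → ℝ)
    (hg : ∀ y, g y = (∑ x, P0 x * W x y * f x) / Q0 y) :
    ∀ y, g y = ρm * (∑ x, P0 x * f x * fm x) * gm y := by

  have hρ : ρm ≠ 0 := ne_of_gt hρmpos
  -- Q0 false = 1 - Q0 true
  have hQf : Q0 false = 1 - Q0 true := by
    have h1 : Q0 false + Q0 true = 1 := by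
      rw [hQ0, hQ0, ← Finset.sum_add_distrib, ← hP0sum]
      apply Finset.sum_congr rfl
      intro x _
      linear_combination P0 x * hWsum x
    linarith
  have hqpos : 0 < 1 - Q0 true := by linarith
  set p := Q0 true with hp
  set a := Real.sqrt p with ha
  set b := Real.sqrt (1 - p) with hb
  have hapos : 0 < a := Real.sqrt_pos.mpr hp0
  have hbpos : 0 < b := Real.sqrt_pos.mpr hqpos
  have ha2 : a ^ 2 = p := Real.sq_sqrt (le_of_lt hp0)
  have hb2 : b ^ 2 = 1 - p := Real.sq_sqrt (le_of_lt hqpos)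
  have hgmf' : gm false = a / b := by
    rw [hgmf, Real.sqrt_div (le_of_lt hp0)]
  have hgmt' : gm true = -(b / a) := by
    rw [hgmt, Real.sqrt_div (le_of_lt hqpos)]
  -- sum identity
  have hsum : ρm * (∑ x, P0 x * f x * fm x) =
      gm false * (∑ x, P0 x * W x false * f x) + gm true * (∑ x, P0 x * W x true * f x) := by
    rw [Finset.mul_sum, Finset.mul_sum, Finset.mul_sum, ← Finset.sum_add_distrib]
    apply Finset.sum_congr rfl
    intro x _
    rw [hfm]
    field_simp
  have hAsum : (∑ x, P0 x * W x false * f x) + (∑ x, P0 x * W x true * f x) = 0 := by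
    rw [← Finset.sum_add_distrib, ← hf]
    apply Finset.sum_congr rfl
    intro x _
    linear_combination P0 x * f x * hWsum x
  set Af := ∑ x, P0 x * W x false * f x with hAf
  have hAt : (∑ x, P0 x * W x true * f x) = -Af := by linarith
  have hab : a ^ 2 + b ^ 2 = 1 := by rw [ha2, hb2]; ring
  intro y
  cases y
  · rw [hg, hsum, hAt, hgmf', hgmt', hQf, ← hb2, ← hAf]
    field_simp
    linear_combination (-Af) * hab
  · rw [hg, hsum, hAt, hgmf', hgmt', ← hp, ← ha2]
    field_simp
    linear_combination Af * hab
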